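/- Over the field F_2, let A be the dg-algebra with idempotents e_1,…,e_k and generators a_{ij} for 1 ≤ i ≤ j ≤ k, with differential ∂(a_{ij}) = δ_{ij} e_i + Σ_{m>i} a_{mj} a_{im} (extended by the Leibniz rule). Then ∂² = 0, and moreover ∂(a_{kk}) = e_k while a_{kk} does not occur in ∂(a_{ij}) for any (i,j) ≠ (k,k); hence by the exact-removal lemma, the quotient of A by the ideal generated by all a_{ij} with i = k or j = k (and e_k) is quasi-isomorphic to A. -/

import Mathlib

namespace Stmt15

/-- The quiver with one vertex for each strand `Ω_1, …, Ω_k` (0-indexed) and one arrow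
`i → j` for every `i ≤ j` (the Reeb chord `a_{ij}`). -/
scoped instance triQuiver (k : ℕ) : Quiver (Fin k) := ⟨fun i j => PLift (i ≤ j)⟩

/-- The product in `A` of the idempotents/arrow-generators along a quiver path. -/
def pathProd {A : Type*} [Ring A] {V : Type*} [Quiver V] (e : V → A)
    (ar : ∀ {i j : V}, (i ⟶ j) → A) : ∀ {i j : V}, Quiver.Path i j → A
  | i, _, Quiver.Path.nil => e i
  | _, _, Quiver.Path.cons p f => ar f * pathProd e (fun {_ _} g => ar g) p

/-- The two-sided ideal of `A` (as an `F₂`-submodule) generated by a set `S`. -/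
def twoSidedSpan {A : Type*} [Ring A] [Algebra (ZMod 2) A] (S : Set A) :
    Submodule (ZMod 2) A :=
  Submodule.span (ZMod 2) {x | ∃ u v : A, ∃ s ∈ S, x = u * s * v}

/-- `f` is a chain map from `(M, dM)` to `(N, dN)` which induces an isomorphism
on homology (a quasi-isomorphism). -/
def IsQuasiIso {M N : Type*} [AddCommGroup M] [Module (ZMod 2) M]
    [AddCommGroup N] [Module (ZMod 2) N]
    (dM : M →ₗ[ZMod 2] M) (dN : N →ₗ[ZMod 2] N) (f : M →ₗ[ZMod 2] N) : Prop :=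
  (∀ x, f (dM x) = dN (f x)) ∧
  (∀ y, dN y = 0 → ∃ x, dM x = 0 ∧ ∃ z, y - f x = dN z) ∧
  (∀ x, dM x = 0 → (∃ z, f x = dN z) → ∃ w, x = dM w)

/-- Over `F₂`, let `A` be the semi-free dg-algebra with idempotents
`e_1, …, e_k` and generators `a_{ij}` for `i ≤ j`, with
`∂(a_{ij}) = δ_{ij} e_i + Σ_{i<m<j} a_{mj} a_{im}`.  Then `∂² = 0`, `∂(a_{kk}) = e_k`,
`a_{kk}` does not occur in the differential of any other generator, and hence (by the
exact-removal lemma) the quotient of `A` by the two-sided ideal generated by all arrows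
through the last vertex (and `e_k`) is quasi-isomorphic to `A`. -/
theorem stmt15 (k : ℕ) (hk : 0 < k)
    (A : Type*) [Ring A] [Algebra (ZMod 2) A]
    (e : Fin k → A) (a : Fin k → Fin k → A)
    (ha0 : ∀ i j : Fin k, ¬ i ≤ j → a i j = 0)
    (horth : ∀ i j, e i * e j = if i = j then e i else 0)
    (hsum : ∑ i, e i = 1)
    (hcompat : ∀ i j : Fin k, i ≤ j → e j * a i j = a i j ∧ a i j * e i = a i j)
    (hfree : ∃ bb : Module.Basis (Σ i : Fin k, Σ j : Fin k, Quiver.Path i j) (ZMod 2) A,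
      ∀ (i j : Fin k) (p : Quiver.Path i j),
        bb ⟨i, j, p⟩ = pathProd e (fun {i' j'} _ => a i' j') p)
    (D : A →ₗ[ZMod 2] A)
    (hleib : ∀ x y, D (x * y) = D x * y + x * D y)
    (hde : ∀ i, D (e i) = 0)
    (hdc : ∀ i j : Fin k, i ≤ j →
      D (a i j) = (if i = j then e i else 0) + ∑ m ∈ Finset.Ioo i j, a m j * a i m)
    (K : Fin k) (hK : K.val = k - 1)
    (I : Submodule (ZMod 2) A)
    (hI : I = twoSidedSpan
      ({x : A | ∃ i' j' : Fin k, (i' = K ∨ j' = K) ∧ x = a i' j'} ∪ {e K})) :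
    (D ∘ₗ D = 0) ∧
    (D (a K K) = e K) ∧
    (∀ i j : Fin k, i ≤ j → ¬(i = K ∧ j = K) →
      D (a i j) ∈ Algebra.adjoin (ZMod 2)
        ({x : A | ∃ i' j' : Fin k, ¬(i' = K ∧ j' = K) ∧ x = a i' j'} ∪ Set.range e)) ∧
    (∃ hsub : I ≤ I.comap D, IsQuasiIso D (Submodule.mapQ I I D hsub) I.mkQ) := by
  classical
  obtain ⟨bb, hbb⟩ := hfree
  -- characteristic 2
  have h2 : ∀ z : A, z + z = 0 := by
    intro z
    have h := two_smul (ZMod 2) z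
    rw [show (2 : ZMod 2) = 0 from rfl, zero_smul] at h
    exact h.symm
  have hKmax : ∀ j : Fin k, j ≤ K := by
    intro j
    have hj := j.isLt
    rw [Fin.le_def, hK]
    omega
  -- D² kills the generators a i j
  have hDDa : ∀ i j : Fin k, D (D (a i j)) = 0 := by
    intro i j
    by_cases hij : i ≤ j
    · rw [hdc i j hij, map_add, map_sum]
      have hif : D (if i = j then e i else 0) = 0 := by
        split <;> simp [hde]
      rw [hif, zero_add]
      set T := Finset.Ioo i j with hT
      have hfilt1 : ∀ m ∈ T, T.filter (fun n => m < n) = Finset.Ioo m j := by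
        intro m hm
        obtain ⟨h1, h2'⟩ := Finset.mem_Ioo.mp hm
        ext n
        simp only [Finset.mem_filter, Finset.mem_Ioo, hT]
        exact ⟨fun h => ⟨h.2, h.1.2⟩, fun h => ⟨⟨h1.trans h.1, h.2⟩, h.1⟩⟩
      have hfilt2 : ∀ m ∈ T, T.filter (fun n => n < m) = Finset.Ioo i m := by
        intro m hm
        obtain ⟨h1, h2'⟩ := Finset.mem_Ioo.mp hm
        ext n
        simp only [Finset.mem_filter, Finset.mem_Ioo, hT]
        exact ⟨fun h => ⟨h.1.1, h.2⟩, fun h => ⟨⟨h.1, h.2.trans h2'⟩, h.2⟩⟩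
      have key : ∀ m ∈ T, D (a m j * a i m)
          = (∑ n ∈ T, if m < n then a n j * (a m n * a i m) else 0)
          + (∑ n ∈ T, if n < m then a m j * (a n m * a i n) else 0) := by
        intro m hm
        obtain ⟨h1, h2'⟩ := Finset.mem_Ioo.mp hm
        rw [hleib, hdc m j h2'.le, hdc i m h1.le, if_neg h2'.ne, if_neg h1.ne,
          zero_add, zero_add, Finset.sum_mul, Finset.mul_sum,
          ← hfilt1 m hm, ← hfilt2 m hm, Finset.sum_filter, Finset.sum_filter]
        congr 1
        · exact Finset.sum_congr rfl fun n _ => by split <;> simp [mul_assoc]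
      rw [Finset.sum_congr rfl key, Finset.sum_add_distrib]
      have hswap : (∑ m ∈ T, ∑ n ∈ T, if n < m then a m j * (a n m * a i n) else 0)
          = ∑ m ∈ T, ∑ n ∈ T, if m < n then a n j * (a m n * a i m) else 0 := by
        rw [Finset.sum_comm]
      rw [hswap]
      exact h2 _
    · rw [ha0 i j hij]
      simp
  -- D² kills products
  have hDDmul : ∀ x y : A, D (D x) = 0 → D (D y) = 0 → D (D (x * y)) = 0 := by
    intro x y hx hy
    rw [hleib, map_add, hleib, hleib, hx, hy, zero_mul, mul_zero, zero_add, add_zero]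
    exact h2 _
  -- D² = 0
  have hDD : D ∘ₗ D = 0 := by
    apply bb.ext
    rintro ⟨i, j, p⟩
    rw [hbb]
    simp only [LinearMap.comp_apply, LinearMap.zero_apply]
    induction p with
    | nil => simp [pathProd, hde]
    | @cons b c p f ih =>
        have hsplit : pathProd e (fun {i' j'} _ => a i' j') (Quiver.Path.cons p f)
            = a b c * pathProd e (fun {i' j'} _ => a i' j') p := by rw [pathProd]
        rw [hsplit]
        exact hDDmul _ _ (hDDa _ _) ih
  have hDDx : ∀ x : A, D (D x) = 0 := fun x => LinearMap.congr_fun hDD x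
  -- ∂ a_{KK} = e_K
  have hdK : D (a K K) = e K := by
    rw [hdc K K le_rfl, if_pos rfl, Finset.Ioo_self, Finset.sum_empty, add_zero]
  -- membership lemma : I = {x | e_K * x = x}
  have pathA : ∀ (s t : Fin k) (p : Quiver.Path s t),
      pathProd e (fun {i' j'} _ => a i' j') p * e K
        = if s = K then pathProd e (fun {i' j'} _ => a i' j') p else 0 := by
    intro s t p
    induction p with
    | nil => simpa [pathProd] using horth s K
    | @cons b c p f ih =>
        have hsplit : pathProd e (fun {i' j'} _ => a i' j') (Quiver.Path.cons p f)
            = a b c * pathProd e (fun {i' j'} _ => a i' j') p := by rw [pathProd]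
        rw [hsplit, mul_assoc, ih]
        split <;> simp
  have pathB : ∀ (t : Fin k) (p : Quiver.Path K t),
      t = K ∧ e K * pathProd e (fun {i' j'} _ => a i' j') p
        = pathProd e (fun {i' j'} _ => a i' j') p := by
    intro t p
    induction p with
    | nil => exact ⟨rfl, by simpa [pathProd] using horth K K⟩
    | @cons b c p f ih =>
        have hb : b = K := ih.1
        have hc : c = K := le_antisymm (hKmax c) (hb ▸ f.down)
        refine ⟨hc, ?_⟩
        have hsplit : pathProd e (fun {i' j'} _ => a i' j') (Quiver.Path.cons p f)
            = a b c * pathProd e (fun {i' j'} _ => a i' j') p := by rw [pathProd]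
        rw [hsplit, ← mul_assoc]
        congr 1
        calc e K * a b c = e c * a b c := by rw [hc]
          _ = a b c := (hcompat b c f.down).1
  have lemC : ∀ x : A, e K * (x * e K) = x * e K := by
    have heq : (LinearMap.mulLeft (ZMod 2) (e K)).comp (LinearMap.mulRight (ZMod 2) (e K))
        = LinearMap.mulRight (ZMod 2) (e K) := by
      apply bb.ext
      rintro ⟨s, t, p⟩
      simp only [LinearMap.comp_apply, LinearMap.mulLeft_apply, LinearMap.mulRight_apply, hbb]
      rw [pathA]
      split
      · next h =>
          subst h
          exact (pathB t p).2
      · simp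
    intro x
    exact LinearMap.congr_fun heq x
  have memI_iff : ∀ x : A, x ∈ I ↔ e K * x = x := by
    intro x
    constructor
    · intro hx
      rw [hI] at hx
      have hspan : twoSidedSpan ({x : A | ∃ i' j' : Fin k, (i' = K ∨ j' = K) ∧ x = a i' j'}
            ∪ {e K})
          ≤ LinearMap.ker (LinearMap.mulLeft (ZMod 2) (e K) - LinearMap.id) := by
        apply Submodule.span_le.mpr
        rintro y ⟨u, v, s, hs, rfl⟩
        have hes : e K * s = s := by
          rcases hs with ⟨i', j', hij, rfl⟩ | hs
          · by_cases hle : i' ≤ j'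
            · have hjK : j' = K := by
                rcases hij with hiK | hjK
                · exact le_antisymm (hKmax j') (hiK ▸ hle)
                · exact hjK
              calc e K * a i' j' = e j' * a i' j' := by rw [hjK]
                _ = a i' j' := (hcompat i' j' hle).1
            · rw [ha0 i' j' hle, mul_zero]
          · have hsE : s = e K := hs
            subst hsE
            simpa using horth K K
        simp only [SetLike.mem_coe, LinearMap.mem_ker, LinearMap.sub_apply,
          LinearMap.mulLeft_apply, LinearMap.id_apply, sub_eq_zero]
        calc e K * (u * s * v)
            = e K * (u * (s * v)) := by rw [mul_assoc]
          _ = e K * (u * ((e K * s) * v)) := by rw [hes]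
          _ = e K * (u * (e K * (s * v))) := by rw [mul_assoc (e K) s v]
          _ = e K * ((u * e K) * (s * v)) := by rw [← mul_assoc u]
          _ = (e K * (u * e K)) * (s * v) := by rw [← mul_assoc]
          _ = (u * e K) * (s * v) := by rw [lemC]
          _ = u * (e K * (s * v)) := by rw [mul_assoc]
          _ = u * ((e K * s) * v) := by rw [← mul_assoc (e K) s v]
          _ = u * (s * v) := by rw [hes]
          _ = u * s * v := by rw [mul_assoc]
      have := hspan hx
      simpa [LinearMap.mem_ker, sub_eq_zero] using this
    · intro hx
      rw [hI]
      apply Submodule.subset_span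
      exact ⟨1, x, e K, Or.inr rfl, by rw [one_mul, hx]⟩
  -- D preserves I
  have hsub : I ≤ I.comap D := by
    intro x hx
    have hx' := (memI_iff x).1 hx
    have hDx : D x = e K * D x := by
      conv_lhs => rw [← hx']
      rw [hleib, hde, zero_mul, zero_add]
    exact Submodule.mem_comap.mpr ((memI_iff (D x)).2 hDx.symm)
  refine ⟨hDD, hdK, ?_, hsub, ?_, ?_, ?_⟩
  -- no a_{KK} in other differentials
  · intro i j hij hne
    rw [hdc i j hij]
    apply Subalgebra.add_mem
    · split
      · exact Algebra.subset_adjoin (Or.inr ⟨i, rfl⟩)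
      · exact Subalgebra.zero_mem _
    · apply Subalgebra.sum_mem
      intro m hm
      obtain ⟨h1, h2'⟩ := Finset.mem_Ioo.mp hm
      apply Subalgebra.mul_mem
      · exact Algebra.subset_adjoin (Or.inl ⟨m, j, fun h => h2'.ne (h.1.trans h.2.symm), rfl⟩)
      · exact Algebra.subset_adjoin (Or.inl ⟨i, m, fun h => h1.ne (h.1.trans h.2.symm), rfl⟩)
  -- chain map
  · intro x
    simp [Submodule.mapQ_apply, Submodule.mkQ_apply]
  -- surjective on homology
  · intro y hy
    obtain ⟨x₀, rfl⟩ := Submodule.mkQ_surjective I y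
    rw [Submodule.mkQ_apply, Submodule.mapQ_apply] at hy
    have hu : D x₀ ∈ I := (Submodule.Quotient.mk_eq_zero I).mp hy
    have hu' : e K * D x₀ = D x₀ := (memI_iff _).1 hu
    refine ⟨x₀ - a K K * D x₀, ?_, 0, ?_⟩
    · rw [map_sub, hleib, hdK, hDDx, mul_zero, add_zero, hu', sub_self]
    · rw [map_zero, ← map_sub, sub_sub_cancel]
      rw [Submodule.mkQ_apply]
      apply (Submodule.Quotient.mk_eq_zero I).mpr
      apply (memI_iff _).2
      rw [← mul_assoc, (hcompat K K le_rfl).1]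
  -- injective on homology
  · rintro x hx ⟨z', hz⟩
    obtain ⟨z, rfl⟩ := Submodule.mkQ_surjective I z'
    rw [Submodule.mkQ_apply, Submodule.mkQ_apply, Submodule.mapQ_apply] at hz
    have hv : x - D z ∈ I := (Submodule.Quotient.eq I).mp hz
    have hv' : e K * (x - D z) = x - D z := (memI_iff _).1 hv
    refine ⟨z + a K K * (x - D z), ?_⟩
    have hDv : D (x - D z) = 0 := by
      rw [map_sub, hx, hDDx, sub_zero]
    rw [map_add, hleib, hdK, hv', hDv, mul_zero, add_zero]
    abel

end Stmt15
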